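/- arXiv:1211.2664 — 4 statements merged into one kernel-verified Lean document; each statement's English description precedes it below -/
import Mathlib

section
/- If D is a probability distribution on [N] with total variation distance at least ε from the uniform distribution U, then the set L' = {ℓ ∈ [N] : D(ℓ) < 1/N − ε/(4N)} has cardinality at least (ε/4)·N. -/
open Finset

/-- If `D` is a distribution on `[N]` with total variation distance at least `ε`
from the uniform distribution, then the set
`L' = {ℓ : D ℓ < 1/N − ε/(4N)}` has cardinality at least `(ε/4)·N`. -/
theorem many_light_points_of_far_from_uniform (N : ℕ) (D : Fin N → ℝ) (ε : ℝ)
    (hnn : ∀ i, 0 ≤ D i) (hsum : ∑ i, D i = 1)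
    (hε : 0 < ε ∧ ε ≤ 1)
    (hfar : ε ≤ (1/2) * ∑ i, |D i - 1/(N : ℝ)|) :
    (ε/4) * N ≤ ((Finset.univ.filter (fun ℓ => D ℓ < 1/(N : ℝ) - ε/(4*N))).card : ℝ) := by
  obtain ⟨hε0, hε1⟩ := hε
  rcases Nat.eq_zero_or_pos N with h0 | hN
  · subst h0; simp at hfar ⊢
  have hNpos : (0:ℝ) < N := by exact_mod_cast hN
  set f : Fin N → ℝ := fun i => max (1/(N:ℝ) - D i) 0 with hf
  have hsum0 : ∑ i, (D i - 1/(N:ℝ)) = 0 := by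
    rw [Finset.sum_sub_distrib, hsum, Finset.sum_const, Finset.card_univ, Fintype.card_fin]
    rw [nsmul_eq_mul, mul_one_div_cancel hNpos.ne', sub_self]
  have habs : ∑ i, |D i - 1/(N:ℝ)| = 2 * ∑ i, f i := by
    have key : ∀ i : Fin N, |D i - 1/(N:ℝ)| = (D i - 1/(N:ℝ)) + 2 * f i := by
      intro i
      show |D i - 1/(N:ℝ)| = (D i - 1/(N:ℝ)) + 2 * max (1/(N:ℝ) - D i) 0
      rcases le_or_gt (1/(N:ℝ)) (D i) with h | h
      · rw [abs_of_nonneg (by linarith), max_eq_right (by linarith)]; ring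
      · rw [abs_of_neg (by linarith), max_eq_left (by linarith)]; ring
    rw [Finset.sum_congr rfl (fun i _ => key i), Finset.sum_add_distrib, hsum0,
      ← Finset.mul_sum]
    ring
  have hmaxsum : ε ≤ ∑ i, f i := by rw [habs] at hfar; linarith
  set L := Finset.univ.filter (fun ℓ => D ℓ < 1/(N:ℝ) - ε/(4*N)) with hLdef
  have hsplit : ∑ i, f i = ∑ i ∈ L, f i + ∑ i ∈ Finset.univ \ L, f i := by
    rw [Finset.sum_sdiff_eq_sub (Finset.subset_univ L)]; ring
  have h1 : ∑ i ∈ L, f i ≤ (L.card : ℝ) * (1/(N:ℝ)) := by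
    calc ∑ i ∈ L, f i ≤ ∑ i ∈ L, (1/(N:ℝ)) := by
          apply Finset.sum_le_sum
          intro i _
          have := hnn i
          exact max_le (by linarith) (by positivity)
      _ = (L.card : ℝ) * (1/(N:ℝ)) := by rw [Finset.sum_const, nsmul_eq_mul]
  have h2 : ∑ i ∈ Finset.univ \ L, f i ≤ ε/4 := by
    have hbound : ∀ i ∈ Finset.univ \ L, f i ≤ ε/(4*(N:ℝ)) := by
      intro i hi
      simp only [hLdef, Finset.mem_sdiff, Finset.mem_filter, Finset.mem_univ, true_and,
        not_lt] at hi
      exact max_le (by linarith) (by positivity)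
    calc ∑ i ∈ Finset.univ \ L, f i ≤ ∑ _i ∈ Finset.univ \ L, (ε/(4*(N:ℝ))) :=
          Finset.sum_le_sum hbound
      _ = ((Finset.univ \ L).card : ℝ) * (ε/(4*(N:ℝ))) := by
          rw [Finset.sum_const, nsmul_eq_mul]
      _ ≤ (N : ℝ) * (ε/(4*(N:ℝ))) := by
          apply mul_le_mul_of_nonneg_right _ (by positivity)
          have : (Finset.univ \ L).card ≤ N := by
            calc (Finset.univ \ L).card ≤ (Finset.univ : Finset (Fin N)).card :=
                  Finset.card_le_card (Finset.sdiff_subset)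
              _ = N := by simp
          exact_mod_cast this
      _ = ε/4 := by field_simp
  have hfinal : ε ≤ (L.card : ℝ) * (1/(N:ℝ)) + ε/4 := by
    rw [hsplit] at hmaxsum; linarith
  have : (ε - ε/4) * N ≤ (L.card : ℝ) := by
    rw [sub_mul]
    have := mul_le_mul_of_nonneg_right hfinal (le_of_lt hNpos)
    have hN' : (L.card : ℝ) * (1/(N:ℝ)) * N = L.card := by field_simp
    nlinarith
  linarith
end

section
/- Let D be a distribution on [N] with D(1) ≤ D(2) ≤ … ≤ D(N), let ε₁ ∈ (0,1), and suppose k* ∈ [N] satisfies ε₁ < D({1,…,k*}) ≤ 2ε₁ < D({1,…,k*+1}). Then for every j > k* with D(j) ≥ ε₁, the set S = {1,…,j−1} satisfies ε₁·D(S) ≤ D(j) ≤ D(S)/ε₁ (i.e., S is an ε₁-comparable witness for j). -/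
open Finset

/-- For a monotone distribution `D` on `{1,…,N}` with
`ε₁ < D({1,…,k*}) ≤ 2ε₁ < D({1,…,k*+1})`, every `j > k*` with `D(j) ≥ ε₁`
has `{1,…,j−1}` as an `ε₁`-comparable witness:
`ε₁·D({1,…,j−1}) ≤ D(j) ≤ D({1,…,j−1})/ε₁`. -/
theorem prefix_is_comparable_witness_of_heavy (N k j : ℕ) (D : ℕ → ℝ) (ε₁ : ℝ)
    (hnn : ∀ i, 0 ≤ D i) (hsum : ∑ i ∈ Finset.Icc 1 N, D i = 1)
    (hmono : ∀ i j, 1 ≤ i → i ≤ j → j ≤ N → D i ≤ D j)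
    (hε : 0 < ε₁ ∧ ε₁ < 1)
    (hk1 : 1 ≤ k) (hkN : k + 1 ≤ N)
    (h1 : ε₁ < ∑ i ∈ Finset.Icc 1 k, D i)
    (h2 : ∑ i ∈ Finset.Icc 1 k, D i ≤ 2*ε₁)
    (h3 : 2*ε₁ < ∑ i ∈ Finset.Icc 1 (k+1), D i)
    (hj : k < j) (hjN : j ≤ N) (hDj : ε₁ ≤ D j) :
    ε₁ * (∑ i ∈ Finset.Icc 1 (j-1), D i) ≤ D j ∧
      D j ≤ (∑ i ∈ Finset.Icc 1 (j-1), D i) / ε₁ := by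
  obtain ⟨hε0, hε1⟩ := hε
  have hS1 : (∑ i ∈ Finset.Icc 1 (j-1), D i) ≤ 1 := by
    rw [← hsum]
    exact Finset.sum_le_sum_of_subset_of_nonneg
      (Finset.Icc_subset_Icc_right (by omega)) (fun i _ _ => hnn i)
  have hSε : ε₁ < ∑ i ∈ Finset.Icc 1 (j-1), D i := by
    refine lt_of_lt_of_le h1 ?_
    exact Finset.sum_le_sum_of_subset_of_nonneg
      (Finset.Icc_subset_Icc_right (by omega)) (fun i _ _ => hnn i)
  have hDj1 : D j ≤ 1 := by
    rw [← hsum]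
    exact Finset.single_le_sum (fun i _ => hnn i)
      (Finset.mem_Icc.mpr ⟨by omega, hjN⟩)
  constructor
  · calc ε₁ * (∑ i ∈ Finset.Icc 1 (j-1), D i) ≤ ε₁ * 1 := by
          exact mul_le_mul_of_nonneg_left hS1 hε0.le
        _ = ε₁ := mul_one _
        _ ≤ D j := hDj
  · rw [le_div_iff₀ hε0]
    calc D j * ε₁ ≤ 1 * ε₁ := mul_le_mul_of_nonneg_right hDj1 hε0.le
      _ = ε₁ := one_mul _
      _ ≤ _ := hSε.le
end

section
/- Let D be a distribution on [N] with D(1) ≤ … ≤ D(N) and suppose k* ∈ [N] satisfies ε₁ < D({1,…,k*}) ≤ 2ε₁ < D({1,…,k*+1}) for some ε₁ ∈ (0,1). Then for every j > k* with D(j) < ε₁, the set {1,…,j−1} can be partitioned into disjoint sets S₁,…,S_t such that (1/2)·D(j) ≤ D(S_i) ≤ 2·D(j) for every i ∈ [t]. -/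
open Finset

lemma part_lemma_aux (D : ℕ → ℝ) (d : ℝ) (hd : 0 < d) :
    ∀ n a b, 1 ≤ a → a ≤ b → b - a ≤ n →
    (∀ i, a ≤ i → i ≤ b → 0 ≤ D i ∧ D i ≤ d) →
    (1/2) * d ≤ ∑ i ∈ Finset.Icc a b, D i →
    ∃ (t : ℕ) (S : Fin t → Finset ℕ),
      (∀ i₁ i₂, i₁ ≠ i₂ → Disjoint (S i₁) (S i₂)) ∧
      (Finset.univ.biUnion S = Finset.Icc a b) ∧
      (∀ i, (1/2) * d ≤ ∑ x ∈ S i, D x ∧ ∑ x ∈ S i, D x ≤ 2 * d) := by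
  intro n
  induction n with
  | zero =>
    intro a b ha hab hn hD hs
    have hab' : a = b := by omega
    subst hab'
    refine ⟨1, fun _ => Finset.Icc a a, ?_, ?_, ?_⟩
    · intro i₁ i₂ h; exact absurd (Subsingleton.elim i₁ i₂) h
    · ext x; simp
    · intro i
      rw [Finset.Icc_self, Finset.sum_singleton]
      have := hD a le_rfl le_rfl
      constructor
      · simpa [Finset.Icc_self, Finset.sum_singleton] using hs
      · linarith [this.2]
  | succ m ih =>
    intro a b ha hab hn hD hs
    by_cases htot : ∑ i ∈ Finset.Icc a b, D i ≤ 2 * d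
    · refine ⟨1, fun _ => Finset.Icc a b, ?_, ?_, ?_⟩
      · intro i₁ i₂ h; exact absurd (Subsingleton.elim i₁ i₂) h
      · ext x; simp
      · intro i; exact ⟨hs, htot⟩
    push_neg at htot
    classical
    have hex : ∃ q, (1/2) * d ≤ ∑ i ∈ Finset.Icc a q, D i := ⟨b, hs⟩
    set p := Nat.find hex with hp_def
    have hp : (1/2) * d ≤ ∑ i ∈ Finset.Icc a p, D i := Nat.find_spec hex
    have hpb : p ≤ b := Nat.find_min' hex hs
    have hap : a ≤ p := by
      by_contra h
      push_neg at h
      rw [Finset.Icc_eq_empty (by omega), Finset.sum_empty] at hp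
      linarith
    have hprefix : ∑ i ∈ Finset.Icc a p, D i ≤ (3/2) * d := by
      rcases eq_or_lt_of_le hap with h | h
      · rw [← h, Finset.Icc_self, Finset.sum_singleton]
        linarith [(hD a le_rfl (by omega)).2]
      · have hmin : ¬ ((1/2) * d ≤ ∑ i ∈ Finset.Icc a (p-1), D i) :=
          Nat.find_min hex (by omega)
        push_neg at hmin
        have hps : p = (p - 1) + 1 := by omega
        have hsplit : ∑ i ∈ Finset.Icc a p, D i
            = ∑ i ∈ Finset.Icc a (p-1), D i + D p := by
          rw [hps, Finset.sum_Icc_succ_top (by omega)]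
          rw [← hps]
        rw [hsplit]
        linarith [(hD p hap hpb).2]
    have hpb' : p < b := by
      rcases eq_or_lt_of_le hpb with h | h
      · rw [h] at hprefix; linarith
      · exact h
    have hsplit : ∑ i ∈ Finset.Icc a p, D i + ∑ i ∈ Finset.Icc (p+1) b, D i
        = ∑ i ∈ Finset.Icc a b, D i := by
      have h1 : Finset.Icc a p = Finset.Ioc (a-1) p := by
        rw [← Finset.Icc_add_one_left_eq_Ioc]; congr 1; omega
      have h2 : Finset.Icc (p+1) b = Finset.Ioc p b := by
        rw [Finset.Icc_add_one_left_eq_Ioc]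
      have h3 : Finset.Icc a b = Finset.Ioc (a-1) b := by
        rw [← Finset.Icc_add_one_left_eq_Ioc]; congr 1; omega
      rw [h1, h2, h3]
      exact Finset.sum_Ioc_consecutive D (by omega) (by omega)
    have hrem : (1/2) * d ≤ ∑ i ∈ Finset.Icc (p+1) b, D i := by linarith
    obtain ⟨t, S, hdisj, hunion, hbnd⟩ :=
      ih (p+1) b (by omega) (by omega) (by omega)
        (fun i h1 h2 => hD i (by omega) h2) hrem
    have hsub : ∀ i, S i ⊆ Finset.Icc (p+1) b := by
      intro i
      rw [← hunion]
      exact Finset.subset_biUnion_of_mem S (Finset.mem_univ i)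
    have key : ∀ i : Fin t, Disjoint (Finset.Icc a p) (S i) := by
      intro i
      rw [Finset.disjoint_left]
      intro x hx hx'
      have h1 := Finset.mem_Icc.mp hx
      have h2 := Finset.mem_Icc.mp (hsub i hx')
      omega
    refine ⟨t+1, Fin.cons (Finset.Icc a p) S, ?_, ?_, ?_⟩
    · intro i₁ i₂ hne
      induction i₁ using Fin.cases with
      | zero =>
        induction i₂ using Fin.cases with
        | zero => exact absurd rfl hne
        | succ i₂ => simpa using key i₂
      | succ i₁ =>
        induction i₂ using Fin.cases with
        | zero => simpa using (key i₁).symm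
        | succ i₂ =>
          simpa using hdisj i₁ i₂ (fun h => hne (congrArg Fin.succ h))
    · ext x
      simp only [Finset.mem_biUnion, Finset.mem_univ, true_and,
        Fin.exists_fin_succ, Fin.cons_zero, Fin.cons_succ]
      have hx : (∃ i, x ∈ S i) ↔ x ∈ Finset.Icc (p+1) b := by
        rw [← hunion]; simp
      rw [hx]
      simp only [Finset.mem_Icc]
      omega
    · intro i
      induction i using Fin.cases with
      | zero =>
        simp only [Fin.cons_zero]
        exact ⟨hp, by linarith⟩
      | succ i => simpa using hbnd i

/-- For a monotone distribution `D` on `{1,…,N}` with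
`ε₁ < D({1,…,k*}) ≤ 2ε₁ < D({1,…,k*+1})`, every `j > k*` with `D(j) < ε₁`
admits a partition of `{1,…,j−1}` into disjoint sets `S₁,…,S_t`, each of which
is a `1/2`-comparable witness for `j`:
`(1/2)·D(j) ≤ D(Sᵢ) ≤ 2·D(j)` for all `i`. -/
theorem prefix_partition_into_comparable_witnesses (N k j : ℕ) (D : ℕ → ℝ) (ε₁ : ℝ)
    (hnn : ∀ i, 0 ≤ D i) (hsum : ∑ i ∈ Finset.Icc 1 N, D i = 1)
    (hmono : ∀ i j, 1 ≤ i → i ≤ j → j ≤ N → D i ≤ D j)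
    (hε : 0 < ε₁ ∧ ε₁ < 1)
    (hk1 : 1 ≤ k) (hkN : k + 1 ≤ N)
    (h1 : ε₁ < ∑ i ∈ Finset.Icc 1 k, D i)
    (h2 : ∑ i ∈ Finset.Icc 1 k, D i ≤ 2*ε₁)
    (h3 : 2*ε₁ < ∑ i ∈ Finset.Icc 1 (k+1), D i)
    (hj : k < j) (hjN : j ≤ N) (hDj : D j < ε₁) :
    ∃ (t : ℕ) (S : Fin t → Finset ℕ),
      (∀ i₁ i₂, i₁ ≠ i₂ → Disjoint (S i₁) (S i₂)) ∧
      (Finset.univ.biUnion S = Finset.Icc 1 (j-1)) ∧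
      (∀ i, (1/2) * D j ≤ ∑ x ∈ S i, D x ∧ ∑ x ∈ S i, D x ≤ 2 * D j) := by
  have hDle : ∀ i, 1 ≤ i → i ≤ j - 1 → D i ≤ D j := by
    intro i hi1 hi2
    exact hmono i j hi1 (by omega) hjN
  have hdpos : 0 < D j := by
    by_contra h
    push_neg at h
    have hb : ∑ i ∈ Finset.Icc 1 k, D i ≤ 0 := by
      apply Finset.sum_nonpos
      intro i hi
      have hm := Finset.mem_Icc.mp hi
      exact le_trans (hmono i j hm.1 (by omega) hjN) h
    linarith [hε.1]
  have hsub : Finset.Icc 1 k ⊆ Finset.Icc 1 (j-1) :=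
    Finset.Icc_subset_Icc_right (by omega)
  have hmass : (1/2) * D j ≤ ∑ i ∈ Finset.Icc 1 (j-1), D i := by
    have : ∑ i ∈ Finset.Icc 1 k, D i ≤ ∑ i ∈ Finset.Icc 1 (j-1), D i :=
      Finset.sum_le_sum_of_subset_of_nonneg hsub (fun i _ _ => hnn i)
    linarith [hnn j]
  exact part_lemma_aux D (D j) hdpos (j-1) 1 (j-1) le_rfl (by omega) (by omega)
    (fun i hi1 hi2 => ⟨hnn i, hDle i hi1 hi2⟩) hmass
end

section
/- Suppose D₁, D₂ are distributions on [N] with d_TV(D₁,D₂) ≥ ε, let ε̃ ≤ ε/100, and let R = {r₁,…,r_t} be an (ε̃,ε̃)-cover for D₁. Then there exists j ∈ [t] such that for every α ∈ [ε̃, 2ε̃], letting U = U^{D₁}_α(r_j) = {y : D₁(r_j)/(1+α) ≤ D₁(y) ≤ (1+α)·D₁(r_j)}, at least one of the following holds: (1) D₁(U) ≥ ε̃/t and D₂(U) ∉ [1−ε̃, 1+ε̃]·D₁(U), or D₁(U) < ε̃/t and D₂(U) > 2ε̃/t; (2) D₁(U) ≥ ε̃/t and at least an ε̃-fraction of the points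 in U satisfy D₂(i)/D₂(r_j) ∉ [1/(1+α+ε̃), 1+α+ε̃]; (3) D₁(U) ≥ ε̃/t and the D₂-weight of points i ∈ U with D₂(i)/D₂(r_j) ∉ [1/(1+α+ε̃), 1+α+ε̃] is at least ε̃²/t. -/
open Finset

set_option maxHeartbeats 2000000

open Finset

/-- among three intervals with a common point, one is contained in the union
of the other two -/
lemma three_cover {a1 b1 a2 b2 a3 b3 x : ℝ}
    (h1 : a1 ≤ x ∧ x ≤ b1) (h2 : a2 ≤ x ∧ x ≤ b2) (h3 : a3 ≤ x ∧ x ≤ b3) :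
    (∀ y, a1 ≤ y ∧ y ≤ b1 → (a2 ≤ y ∧ y ≤ b2) ∨ (a3 ≤ y ∧ y ≤ b3)) ∨
    (∀ y, a2 ≤ y ∧ y ≤ b2 → (a1 ≤ y ∧ y ≤ b1) ∨ (a3 ≤ y ∧ y ≤ b3)) ∨
    (∀ y, a3 ≤ y ∧ y ≤ b3 → (a1 ≤ y ∧ y ≤ b1) ∨ (a2 ≤ y ∧ y ≤ b2)) := by
  obtain ⟨hx1, hx1'⟩ := h1
  obtain ⟨hx2, hx2'⟩ := h2
  obtain ⟨hx3, hx3'⟩ := h3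
  rcases le_total a1 a2 with A12 | A12 <;>
  rcases le_total a1 a3 with A13 | A13 <;>
  rcases le_total a2 a3 with A23 | A23 <;>
  rcases le_total b1 b2 with B12 | B12 <;>
  rcases le_total b1 b3 with B13 | B13 <;>
  rcases le_total b2 b3 with B23 | B23 <;>
  first
  | · refine Or.inl fun y hy => ?_
      obtain ⟨hya, hyb⟩ := hy
      rcases le_total y x with h | h <;>
        first
        | exact Or.inl ⟨by linarith, by linarith⟩
        | exact Or.inr ⟨by linarith, by linarith⟩
  | · refine Or.inr (Or.inl fun y hy => ?_)
      obtain ⟨hya, hyb⟩ := hy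
      rcases le_total y x with h | h <;>
        first
        | exact Or.inl ⟨by linarith, by linarith⟩
        | exact Or.inr ⟨by linarith, by linarith⟩
  | · refine Or.inr (Or.inr fun y hy => ?_)
      obtain ⟨hya, hyb⟩ := hy
      rcases le_total y x with h | h <;>
        first
        | exact Or.inl ⟨by linarith, by linarith⟩
        | exact Or.inr ⟨by linarith, by linarith⟩

/-- From any finite family of intervals one can select a subfamily covering
the same points, such that no point lies in three distinct selected intervals. -/
lemma exists_subcover {ι : Type*} [Fintype ι] [DecidableEq ι] (a b : ι → ℝ) :
    ∃ S : Finset ι,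
      (∀ x : ℝ, (∃ j, a j ≤ x ∧ x ≤ b j) → ∃ j ∈ S, a j ≤ x ∧ x ≤ b j) ∧
      (∀ x : ℝ, ∀ p ∈ S, ∀ q ∈ S, ∀ r ∈ S,
        (a p ≤ x ∧ x ≤ b p) → (a q ≤ x ∧ x ≤ b q) → (a r ≤ x ∧ x ≤ b r) →
        p = q ∨ p = r ∨ q = r) := by
  classical
  set P : Finset ι → Prop := fun S =>
    ∀ x : ℝ, (∃ j, a j ≤ x ∧ x ≤ b j) → ∃ j ∈ S, a j ≤ x ∧ x ≤ b j with hP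
  have hne : ((Finset.univ : Finset (Finset ι)).filter P).Nonempty := by
    refine ⟨Finset.univ, ?_⟩
    simp only [Finset.mem_filter, Finset.mem_univ, true_and, hP]
    exact fun x ⟨j, hj⟩ => ⟨j, hj⟩
  obtain ⟨S, hSmem, hSmin⟩ := Finset.exists_min_image _ Finset.card hne
  have hScov : P S := (Finset.mem_filter.mp hSmem).2
  refine ⟨S, hScov, ?_⟩
  intro x p hp q hq r hr hpx hqx hrx
  by_contra hne3
  push_neg at hne3
  obtain ⟨hpq, hpr, hqr⟩ := hne3
  -- one of the three intervals is redundant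
  have hremove : ∀ z ∈ S, (∀ y, a z ≤ y ∧ y ≤ b z →
      ∃ k ∈ S.erase z, a k ≤ y ∧ y ≤ b k) → False := by
    intro z hz hcov
    have hPz : P (S.erase z) := by
      intro x' hx'
      obtain ⟨j, hj, hjx⟩ := hScov x' hx'
      by_cases hjz : j = z
      · exact hcov x' (hjz ▸ hjx)
      · exact ⟨j, Finset.mem_erase.mpr ⟨hjz, hj⟩, hjx⟩
    have hmem : S.erase z ∈ (Finset.univ : Finset (Finset ι)).filter P :=
      Finset.mem_filter.mpr ⟨Finset.mem_univ _, hPz⟩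
    have := hSmin _ hmem
    have hlt : (S.erase z).card < S.card := Finset.card_erase_lt_of_mem hz
    omega
  rcases three_cover hpx hqx hrx with hc | hc | hc
  · refine hremove p hp fun y hy => ?_
    rcases hc y hy with h | h
    · exact ⟨q, Finset.mem_erase.mpr ⟨Ne.symm hpq, hq⟩, h⟩
    · exact ⟨r, Finset.mem_erase.mpr ⟨Ne.symm hpr, hr⟩, h⟩
  · refine hremove q hq fun y hy => ?_
    rcases hc y hy with h | h
    · exact ⟨p, Finset.mem_erase.mpr ⟨hpq, hp⟩, h⟩
    · exact ⟨r, Finset.mem_erase.mpr ⟨Ne.symm hqr, hr⟩, h⟩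
  · refine hremove r hr fun y hy => ?_
    rcases hc y hy with h | h
    · exact ⟨p, Finset.mem_erase.mpr ⟨hpr, hp⟩, h⟩
    · exact ⟨q, Finset.mem_erase.mpr ⟨hqr, hq⟩, h⟩

lemma ptwise_bound {e α v w d1 d2 : ℝ} (he : 0 < e) (he2 : e ≤ 1/100)
    (ha1 : e ≤ α) (ha2 : α ≤ 2*e) (hv : 0 ≤ v) (hw : 0 ≤ w)
    (hwl : (1-2*e)*v ≤ (1+α)*((1+α+e)*w))
    (hD1u : d1 ≤ (1+α)*v) (hD1l : v ≤ (1+α)*d1)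
    (hD2l : w ≤ (1+α+e)*d2) :
    d1 - d2 ≤ 20*e*d1 := by
  have hQ : (0:ℝ) < 1+α := by linarith
  have hR : (0:ℝ) < 1+α+e := by linarith
  have hd1 : 0 ≤ d1 := by nlinarith
  set K : ℝ := (1+α)*((1+α+e)*(1+α+e)) with hKdef
  have hK : 0 < K := by positivity
  have hKQ : 1+α ≤ K := by nlinarith
  have hA : (1-2*e)*v ≤ K*d2 := by
    have h := mul_le_mul_of_nonneg_left hD2l (mul_pos hQ hR).le
    calc (1-2*e)*v ≤ (1+α)*((1+α+e)*w) := hwl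
      _ ≤ (1+α)*(1+α+e)*((1+α+e)*d2) := by linarith [h]
      _ = K*d2 := by ring
  have hB : K*d1 ≤ K*((1+α)*v) := mul_le_mul_of_nonneg_left hD1u hK.le
  have hq2 : (1+α)*(1+α+e) ≤ 1+6*e := by nlinarith
  have hC : K*(1+α) ≤ 1 - 2*e + 18*e := by
    have h1 : (0:ℝ) ≤ (1+α)*(1+α+e) := by positivity
    have : K*(1+α) = ((1+α)*(1+α+e))*((1+α)*(1+α+e)) := by ring
    rw [this]
    nlinarith [mul_le_mul hq2 hq2 h1 (by linarith : (0:ℝ) ≤ 1+6*e)]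
  have hD : K*(d1-d2) ≤ 18*e*v := by nlinarith
  have hE : 18*e*v ≤ 18*e*((1+α)*d1) :=
    mul_le_mul_of_nonneg_left hD1l (by positivity)
  have hKQ2 : (18:ℝ)*(1+α) ≤ 20*K := by nlinarith
  have hF : 18*e*((1+α)*d1) ≤ 20*e*(K*d1) := by
    nlinarith [mul_le_mul_of_nonneg_right hKQ2 (mul_nonneg he.le hd1)]
  have hfin : K*(d1-d2) ≤ K*(20*e*d1) := by linarith
  exact le_of_mul_le_mul_left (by linarith) hK

/-- If `d_TV(D₁,D₂) ≥ ε` and `R = (r₁,…,r_t)` is an `(ε̃,ε̃)`-cover for `D₁`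
with `ε̃ ≤ ε/100`, then some `r_j` witnesses the discrepancy: for every
`α ∈ [ε̃,2ε̃]`, with `U = U^{D₁}_α(r_j)`, at least one of three conditions
(a weight discrepancy of `U`, many ratio-violating points in `U`, or large
`D₂`-weight of ratio-violating points) holds. -/
theorem cover_point_witnesses_discrepancy (N t : ℕ) (D₁ D₂ : Fin N → ℝ)
    (ε εt : ℝ) (R : Fin t → Fin N)
    (hnn₁ : ∀ i, 0 ≤ D₁ i) (hsum₁ : ∑ i, D₁ i = 1)
    (hnn₂ : ∀ i, 0 ≤ D₂ i) (hsum₂ : ∑ i, D₂ i = 1)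
    (hεt : 0 < εt) (hεt' : εt ≤ ε/100)
    (hcover : ∑ y ∈ Finset.univ.filter
        (fun y => ¬ ∃ j : Fin t,
          D₁ (R j)/(1+εt) ≤ D₁ y ∧ D₁ y ≤ (1+εt) * D₁ (R j)), D₁ y ≤ εt)
    (hfar : ε ≤ (1/2) * ∑ i, |D₁ i - D₂ i|) :
    ∃ j : Fin t, ∀ α : ℝ, εt ≤ α → α ≤ 2*εt →
      let U : Finset (Fin N) := Finset.univ.filter
        (fun y => D₁ (R j)/(1+α) ≤ D₁ y ∧ D₁ y ≤ (1+α) * D₁ (R j))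
      let bad : Finset (Fin N) := U.filter
        (fun i => ¬ (1/(1+α+εt) ≤ D₂ i / D₂ (R j) ∧ D₂ i / D₂ (R j) ≤ 1+α+εt))
      -- (1) weight discrepancy
      ((εt/t ≤ ∑ y ∈ U, D₁ y ∧
          ¬ ((1-εt) * ∑ y ∈ U, D₁ y ≤ ∑ y ∈ U, D₂ y ∧
             ∑ y ∈ U, D₂ y ≤ (1+εt) * ∑ y ∈ U, D₁ y)) ∨
       (∑ y ∈ U, D₁ y < εt/t ∧ 2*εt/t < ∑ y ∈ U, D₂ y)) ∨
      -- (2) many ratio-violating points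
      (εt/t ≤ ∑ y ∈ U, D₁ y ∧ εt * U.card ≤ (bad.card : ℝ)) ∨
      -- (3) ratio-violating points have large D₂-weight
      (εt/t ≤ ∑ y ∈ U, D₁ y ∧ εt^2/t ≤ ∑ i ∈ bad, D₂ i) := by
  by_contra hcon
  push_neg at hcon
  simp only [not_or, not_and, not_lt, not_le] at hcon
  choose α hα1 hα2 hcon using hcon
  -- global bounds
  have habs1 : ∑ i, |D₁ i - D₂ i| ≤ 2 := by
    have h := Finset.sum_le_sum (s := Finset.univ)
      (fun i _ => abs_le.mpr ⟨by linarith [hnn₁ i, hnn₂ i], by linarith [hnn₁ i, hnn₂ i]⟩ :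
        ∀ i ∈ Finset.univ, |D₁ i - D₂ i| ≤ D₁ i + D₂ i)
    rw [Finset.sum_add_distrib, hsum₁, hsum₂] at h
    linarith
  have hε1 : ε ≤ 1 := by linarith
  have he100 : εt ≤ 1/100 := by linarith
  have hεpos : 0 < ε := by linarith
  -- positive part
  set pp : Fin N → ℝ := fun i => max (D₁ i - D₂ i) 0 with hppdef
  have hpp0 : ∀ i, 0 ≤ pp i := fun i => le_max_right _ _
  have hppD : ∀ i, pp i ≤ D₁ i := fun i => max_le (by linarith [hnn₂ i]) (hnn₁ i)
  have hfar2 : ε ≤ ∑ i, pp i := by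
    have habs2 : ∀ i : Fin N, |D₁ i - D₂ i| = 2 * pp i - (D₁ i - D₂ i) := by
      intro i
      rcases le_total (D₁ i - D₂ i) 0 with h | h
      · rw [abs_of_nonpos h]
        simp only [hppdef]
        rw [max_eq_right h]
        ring
      · rw [abs_of_nonneg h]
        simp only [hppdef]
        rw [max_eq_left h]
        ring
    have h1 : ∑ i, |D₁ i - D₂ i|
        = 2 * (∑ i, pp i) - ((∑ i, D₁ i) - (∑ i, D₂ i)) := by
      rw [Finset.mul_sum, ← Finset.sum_sub_distrib, ← Finset.sum_sub_distrib]
      exact Finset.sum_congr rfl fun i _ => habs2 i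
    rw [h1, hsum₁, hsum₂] at hfar
    linarith
  -- dispose of t = 0
  rcases Nat.eq_zero_or_pos t with ht0 | ht0
  · subst ht0
    have hfil : (Finset.univ.filter (fun y => ¬ ∃ j : Fin 0,
        D₁ (R j)/(1+εt) ≤ D₁ y ∧ D₁ y ≤ (1+εt) * D₁ (R j))) = Finset.univ := by
      refine Finset.filter_eq_self.mpr fun y _ h => ?_
      obtain ⟨j, -⟩ := h
      exact j.elim0
    rw [hfil, hsum₁] at hcover
    linarith
  have htR : (0:ℝ) < t := Nat.cast_pos.mpr ht0
  have hα0 : ∀ j : Fin t, (0:ℝ) < 1 + α j := fun j => by linarith [hα1 j]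
  -- the subcover
  obtain ⟨S, hScov, hS2⟩ := exists_subcover
    (fun j => D₁ (R j)/(1+α j)) (fun j => (1+α j) * D₁ (R j))
  have hmulcard : ∀ x : ℝ,
      ((S.filter (fun j => D₁ (R j)/(1+α j) ≤ x ∧ x ≤ (1+α j) * D₁ (R j))).card) ≤ 2 := by
    intro x
    by_contra hc
    push_neg at hc
    obtain ⟨p, q, r, hp, hq, hr, hpq, hpr, hqr⟩ := Finset.two_lt_card_iff.mp hc
    obtain ⟨hpS, hpx⟩ := Finset.mem_filter.mp hp
    obtain ⟨hqS, hqx⟩ := Finset.mem_filter.mp hq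
    obtain ⟨hrS, hrx⟩ := Finset.mem_filter.mp hr
    rcases hS2 x p hpS q hqS r hrS hpx hqx hrx with h | h | h
    exacts [hpq h, hpr h, hqr h]
  -- the swap identity
  have hswapeq : ∀ g : Fin N → ℝ,
      ∑ j ∈ S, ∑ y ∈ Finset.univ.filter
          (fun y => D₁ (R j)/(1+α j) ≤ D₁ y ∧ D₁ y ≤ (1+α j) * D₁ (R j)), g y
      = ∑ y, ((S.filter (fun j =>
          D₁ (R j)/(1+α j) ≤ D₁ y ∧ D₁ y ≤ (1+α j) * D₁ (R j))).card : ℝ) * g y := by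
    intro g
    calc ∑ j ∈ S, ∑ y ∈ Finset.univ.filter
            (fun y => D₁ (R j)/(1+α j) ≤ D₁ y ∧ D₁ y ≤ (1+α j) * D₁ (R j)), g y
        = ∑ j ∈ S, ∑ y, if D₁ (R j)/(1+α j) ≤ D₁ y ∧ D₁ y ≤ (1+α j) * D₁ (R j)
            then g y else 0 :=
          Finset.sum_congr rfl fun j _ => Finset.sum_filter _ _
      _ = ∑ y, ∑ j ∈ S, if D₁ (R j)/(1+α j) ≤ D₁ y ∧ D₁ y ≤ (1+α j) * D₁ (R j)
            then g y else 0 := Finset.sum_comm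
      _ = _ := by
          refine Finset.sum_congr rfl fun y _ => ?_
          rw [← Finset.sum_filter, Finset.sum_const, nsmul_eq_mul]

  -- per-representative bound
  have key : ∀ j : Fin t,
      ∑ y ∈ Finset.univ.filter
        (fun y => D₁ (R j)/(1+α j) ≤ D₁ y ∧ D₁ y ≤ (1+α j) * D₁ (R j)), pp y
      ≤ εt/t + 22*εt* ∑ y ∈ Finset.univ.filter
        (fun y => D₁ (R j)/(1+α j) ≤ D₁ y ∧ D₁ y ≤ (1+α j) * D₁ (R j)), D₁ y := by
    intro j
    obtain ⟨⟨h1, h2⟩, h3, h4⟩ := hcon j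
    set U : Finset (Fin N) := Finset.univ.filter
      (fun y => D₁ (R j)/(1+α j) ≤ D₁ y ∧ D₁ y ≤ (1+α j) * D₁ (R j)) with hUdef
    set B : Finset (Fin N) := U.filter
      (fun i => 1 / (1 + α j + εt) ≤ D₂ i / D₂ (R j) → 1 + α j + εt < D₂ i / D₂ (R j)) with hBdef
    have hU1 : 0 ≤ ∑ y ∈ U, D₁ y := Finset.sum_nonneg fun y _ => hnn₁ y
    have hUmem : ∀ y ∈ U, D₁ (R j)/(1+α j) ≤ D₁ y ∧ D₁ y ≤ (1+α j) * D₁ (R j) :=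
      fun y hy => (Finset.mem_filter.mp hy).2
    rcases lt_or_ge (∑ y ∈ U, D₁ y) (εt/t) with hA | hA
    · have hsmall : ∑ y ∈ U, pp y ≤ ∑ y ∈ U, D₁ y := Finset.sum_le_sum fun y _ => hppD y
      nlinarith [mul_nonneg (mul_nonneg (by norm_num : (0:ℝ) ≤ 22) hεt.le) hU1]
    · have hBcnt := h3 hA
      have hBwt := h4 hA
      have hB12 := h1 hA
      rw [Classical.not_imp, not_lt] at hB12
      obtain ⟨hBl, hBu⟩ := hB12
      set v := D₁ (R j) with hvdef
      set w := D₂ (R j) with hwdef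
      have hv0 : 0 ≤ v := hnn₁ _
      have hw0 : 0 ≤ w := hnn₂ _
      have hS1pos : 0 < ∑ y ∈ U, D₁ y := lt_of_lt_of_le (div_pos hεt htR) hA
      have hvpos : 0 < v := by
        rcases hv0.lt_or_eq with h | h
        · exact h
        · exfalso
          have hz : ∑ y ∈ U, D₁ y ≤ 0 := Finset.sum_nonpos fun y hy => by
            have h2' := (hUmem y hy).2
            rw [← h, mul_zero] at h2'
            exact h2'
          linarith
      have hRpos : (0:ℝ) < 1 + α j + εt := by linarith [hα1 j]
      have hcard_lo : (U.card : ℝ) * (v/(1+α j)) ≤ ∑ y ∈ U, D₁ y := by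
        have h' := Finset.card_nsmul_le_sum U D₁ (v/(1+α j)) (fun y hy => (hUmem y hy).1)
        rwa [nsmul_eq_mul] at h'
      have hUv : (U.card : ℝ) * v ≤ (1+α j) * ∑ y ∈ U, D₁ y := by
        have h' : (U.card:ℝ) * v / (1+α j) ≤ ∑ y ∈ U, D₁ y := by
          rw [mul_div_assoc]; exact hcard_lo
        have h'' := (div_le_iff₀ (hα0 j)).mp h'
        linarith
      have hεS : εt^2/t ≤ εt * ∑ y ∈ U, D₁ y := by
        have hrw : εt^2/t = εt * (εt/t) := by ring
        rw [hrw]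
        exact mul_le_mul_of_nonneg_left hA hεt.le
      have hwpos : 0 < w := by
        rcases hw0.lt_or_eq with h | h
        · exact h
        · exfalso
          have hBU : B = U := by
            rw [hBdef]
            refine Finset.filter_eq_self.mpr fun i _ hle => ?_
            exfalso
            rw [← h, div_zero] at hle
            have hpos : (0:ℝ) < 1/(1 + α j + εt) := by positivity
            linarith
          rw [hBU] at hBwt
          nlinarith [mul_le_mul_of_nonneg_right he100 hS1pos.le]
      set G : Finset (Fin N) := U.filter
        (fun i => ¬ (1 / (1 + α j + εt) ≤ D₂ i / w → 1 + α j + εt < D₂ i / w)) with hGdef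
      have hGB : ∑ i ∈ B, D₂ i + ∑ i ∈ G, D₂ i = ∑ i ∈ U, D₂ i :=
        Finset.sum_filter_add_sum_filter_not U _ D₂
      have hGmem : ∀ i ∈ G, 1/(1 + α j + εt) ≤ D₂ i / w ∧ D₂ i / w ≤ 1 + α j + εt := by
        intro i hi
        have h' := (Finset.mem_filter.mp hi).2
        rw [Classical.not_imp, not_lt] at h'
        exact h'
      have hGup : ∑ i ∈ G, D₂ i ≤ (G.card:ℝ) * ((1 + α j + εt) * w) := by
        have h' := Finset.sum_le_card_nsmul G D₂ ((1 + α j + εt)*w) (fun i hi => by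
          have hle := (hGmem i hi).2
          have := (div_le_iff₀ hwpos).mp hle
          linarith)
        rwa [nsmul_eq_mul] at h'
      have hGcard : (G.card : ℝ) ≤ U.card := by
        exact_mod_cast Finset.card_le_card (Finset.filter_subset _ _)
      have hGlo : (1 - 2*εt) * ∑ y ∈ U, D₁ y < ∑ i ∈ G, D₂ i := by
        linarith
      have hwl : (1-2*εt)*v ≤ (1+α j)*((1 + α j + εt)*w) := by
        have c1 : ∑ i ∈ G, D₂ i ≤ (U.card:ℝ) * ((1 + α j + εt)*w) :=
          hGup.trans (mul_le_mul_of_nonneg_right hGcard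
            (mul_nonneg hRpos.le hw0))
        have c2 : (1 - 2*εt) * ∑ y ∈ U, D₁ y < (U.card:ℝ) * ((1 + α j + εt)*w) :=
          lt_of_lt_of_le hGlo c1
        have c3 : ((1 - 2*εt) * ∑ y ∈ U, D₁ y) * v ≤ ((U.card:ℝ)*v) * ((1 + α j + εt)*w) := by
          nlinarith [mul_lt_mul_of_pos_right c2 hvpos]
        have c4 : ((U.card:ℝ)*v) * ((1 + α j + εt)*w)
            ≤ ((1+α j) * ∑ y ∈ U, D₁ y) * ((1 + α j + εt)*w) :=
          mul_le_mul_of_nonneg_right hUv (mul_nonneg hRpos.le hw0)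
        have c5 : (∑ y ∈ U, D₁ y) * ((1-2*εt)*v)
            ≤ (∑ y ∈ U, D₁ y) * ((1+α j)*((1 + α j + εt)*w)) := by nlinarith [c3, c4]
        exact le_of_mul_le_mul_left c5 hS1pos
      have hGpp : ∀ i ∈ G, pp i ≤ 20*εt*D₁ i := by
        intro i hi
        obtain ⟨hd1l', hd1u⟩ := hUmem i (Finset.mem_of_mem_filter i hi)
        have hd1l : v ≤ (1+α j) * D₁ i := by
          have := (div_le_iff₀ (hα0 j)).mp hd1l'
          linarith
        have hd2l : w ≤ (1 + α j + εt) * D₂ i := by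
          have hle := (hGmem i hi).1
          have := (div_le_div_iff₀ hRpos hwpos).mp hle
          linarith
        have hmain := ptwise_bound hεt he100 (hα1 j) (hα2 j) hv0 hw0 hwl hd1u hd1l hd2l
        have h20 : 0 ≤ 20*εt*D₁ i :=
          mul_nonneg (mul_nonneg (by norm_num) hεt.le) (hnn₁ i)
        simp only [hppdef]
        exact max_le hmain h20
      have hGsum : ∑ i ∈ G, pp i ≤ 20*εt * ∑ y ∈ U, D₁ y := by
        calc ∑ i ∈ G, pp i ≤ ∑ i ∈ G, 20*εt*D₁ i := Finset.sum_le_sum hGpp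
          _ = 20*εt * ∑ i ∈ G, D₁ i := by rw [Finset.mul_sum]
          _ ≤ 20*εt * ∑ y ∈ U, D₁ y := by
              refine mul_le_mul_of_nonneg_left ?_ (by positivity)
              exact Finset.sum_le_sum_of_subset_of_nonneg (Finset.filter_subset _ _)
                (fun i _ _ => hnn₁ i)
      have hBsum : ∑ i ∈ B, pp i ≤ 2*εt * ∑ y ∈ U, D₁ y := by
        have b1 : ∑ i ∈ B, D₁ i ≤ (B.card:ℝ) * ((1+α j)*v) := by
          have h' := Finset.sum_le_card_nsmul B D₁ ((1+α j)*v)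
            (fun i hi => (hUmem i (Finset.mem_of_mem_filter i hi)).2)
          rwa [nsmul_eq_mul] at h'
        have b2 : (B.card:ℝ)*((1+α j)*v) ≤ (εt * U.card)*((1+α j)*v) :=
          mul_le_mul_of_nonneg_right hBcnt.le (mul_nonneg (hα0 j).le hv0)
        have b4 : εt*(1+α j)*((U.card:ℝ)*v) ≤ εt*(1+α j)*((1+α j)* ∑ y ∈ U, D₁ y) :=
          mul_le_mul_of_nonneg_left hUv (mul_nonneg hεt.le (hα0 j).le)
        have hq2 : (1+α j)*(1+α j) ≤ 2 := by nlinarith [hα1 j, hα2 j]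
        have b5 : εt*((1+α j)*(1+α j)) * ∑ y ∈ U, D₁ y ≤ εt*2* ∑ y ∈ U, D₁ y := by
          nlinarith [mul_le_mul_of_nonneg_right hq2 (mul_nonneg hεt.le hU1)]
        have hppB : ∑ i ∈ B, pp i ≤ ∑ i ∈ B, D₁ i := Finset.sum_le_sum (fun i _ => hppD i)
        nlinarith [b1, b2, b4, b5, hppB]
      have hsplitU : ∑ i ∈ B, pp i + ∑ i ∈ G, pp i = ∑ y ∈ U, pp y :=
        Finset.sum_filter_add_sum_filter_not U _ pp
      have hdiv : 0 ≤ εt/t := by positivity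
      linarith
  -- assemble
  have hNCle : ∑ y ∈ Finset.univ.filter (fun y => ¬ ∃ j : Fin t,
      D₁ (R j)/(1+εt) ≤ D₁ y ∧ D₁ y ≤ (1+εt) * D₁ (R j)), pp y ≤ εt :=
    le_trans (Finset.sum_le_sum fun y _ => hppD y) hcover
  have htot : ∑ y ∈ Finset.univ.filter (fun y => ∃ j : Fin t,
        D₁ (R j)/(1+εt) ≤ D₁ y ∧ D₁ y ≤ (1+εt) * D₁ (R j)), pp y
      + ∑ y ∈ Finset.univ.filter (fun y => ¬ ∃ j : Fin t,
        D₁ (R j)/(1+εt) ≤ D₁ y ∧ D₁ y ≤ (1+εt) * D₁ (R j)), pp y = ∑ y, pp y :=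
    Finset.sum_filter_add_sum_filter_not Finset.univ _ pp
  have hCVmem : ∀ y ∈ Finset.univ.filter (fun y => ∃ j : Fin t,
      D₁ (R j)/(1+εt) ≤ D₁ y ∧ D₁ y ≤ (1+εt) * D₁ (R j)),
      1 ≤ ((S.filter (fun j => D₁ (R j)/(1+α j) ≤ D₁ y ∧ D₁ y ≤ (1+α j) * D₁ (R j))).card : ℝ) := by
    intro y hy
    obtain ⟨-, j0, hj1, hj2⟩ := Finset.mem_filter.mp hy
    have hax : D₁ (R j0)/(1+α j0) ≤ D₁ y := by
      refine le_trans ?_ hj1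
      rw [div_le_div_iff₀ (hα0 j0) (by linarith : (0:ℝ) < 1+εt)]
      nlinarith [hnn₁ (R j0), hα1 j0]
    have hbx : D₁ y ≤ (1+α j0) * D₁ (R j0) :=
      le_trans hj2 (mul_le_mul_of_nonneg_right (by linarith [hα1 j0]) (hnn₁ _))
    obtain ⟨k, hkS, hk⟩ := hScov (D₁ y) ⟨j0, hax, hbx⟩
    have hkmem : k ∈ S.filter (fun j =>
        D₁ (R j)/(1+α j) ≤ D₁ y ∧ D₁ y ≤ (1+α j) * D₁ (R j)) :=
      Finset.mem_filter.mpr ⟨hkS, hk⟩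
    have := Finset.card_pos.mpr ⟨k, hkmem⟩
    exact_mod_cast this
  have hCVle : ∑ y ∈ Finset.univ.filter (fun y => ∃ j : Fin t,
        D₁ (R j)/(1+εt) ≤ D₁ y ∧ D₁ y ≤ (1+εt) * D₁ (R j)), pp y
      ≤ ∑ j ∈ S, ∑ y ∈ Finset.univ.filter
        (fun y => D₁ (R j)/(1+α j) ≤ D₁ y ∧ D₁ y ≤ (1+α j) * D₁ (R j)), pp y := by
    rw [hswapeq pp]
    calc ∑ y ∈ Finset.univ.filter (fun y => ∃ j : Fin t,
          D₁ (R j)/(1+εt) ≤ D₁ y ∧ D₁ y ≤ (1+εt) * D₁ (R j)), pp y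
        ≤ ∑ y ∈ Finset.univ.filter (fun y => ∃ j : Fin t,
          D₁ (R j)/(1+εt) ≤ D₁ y ∧ D₁ y ≤ (1+εt) * D₁ (R j)),
          ((S.filter (fun j => D₁ (R j)/(1+α j) ≤ D₁ y ∧ D₁ y ≤ (1+α j) * D₁ (R j))).card : ℝ) * pp y :=
          Finset.sum_le_sum fun y hy => le_mul_of_one_le_left (hpp0 y) (hCVmem y hy)
      _ ≤ ∑ y, ((S.filter (fun j =>
          D₁ (R j)/(1+α j) ≤ D₁ y ∧ D₁ y ≤ (1+α j) * D₁ (R j))).card : ℝ) * pp y :=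
          Finset.sum_le_sum_of_subset_of_nonneg (Finset.filter_subset _ _)
            (fun y _ _ => mul_nonneg (Nat.cast_nonneg _) (hpp0 y))
  have hD1tot : ∑ j ∈ S, ∑ y ∈ Finset.univ.filter
      (fun y => D₁ (R j)/(1+α j) ≤ D₁ y ∧ D₁ y ≤ (1+α j) * D₁ (R j)), D₁ y ≤ 2 := by
    rw [hswapeq D₁]
    calc ∑ y, ((S.filter (fun j =>
          D₁ (R j)/(1+α j) ≤ D₁ y ∧ D₁ y ≤ (1+α j) * D₁ (R j))).card : ℝ) * D₁ y
        ≤ ∑ y, 2 * D₁ y :=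
          Finset.sum_le_sum fun y _ => mul_le_mul_of_nonneg_right
            (by exact_mod_cast hmulcard (D₁ y)) (hnn₁ y)
      _ = 2 := by rw [← Finset.mul_sum, hsum₁, mul_one]
  have hSbound : ∑ j ∈ S, ∑ y ∈ Finset.univ.filter
      (fun y => D₁ (R j)/(1+α j) ≤ D₁ y ∧ D₁ y ≤ (1+α j) * D₁ (R j)), pp y
      ≤ εt + 44*εt := by
    calc ∑ j ∈ S, ∑ y ∈ Finset.univ.filter
          (fun y => D₁ (R j)/(1+α j) ≤ D₁ y ∧ D₁ y ≤ (1+α j) * D₁ (R j)), pp y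
        ≤ ∑ j ∈ S, (εt/t + 22*εt* ∑ y ∈ Finset.univ.filter
          (fun y => D₁ (R j)/(1+α j) ≤ D₁ y ∧ D₁ y ≤ (1+α j) * D₁ (R j)), D₁ y) :=
          Finset.sum_le_sum (fun j _ => key j)
      _ = (S.card : ℝ) * (εt/t) + 22*εt * ∑ j ∈ S, ∑ y ∈ Finset.univ.filter
          (fun y => D₁ (R j)/(1+α j) ≤ D₁ y ∧ D₁ y ≤ (1+α j) * D₁ (R j)), D₁ y := by
          rw [Finset.sum_add_distrib, Finset.sum_const, nsmul_eq_mul, ← Finset.mul_sum]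
      _ ≤ εt + 44*εt := by
          have hc : (S.card:ℝ) ≤ t := by
            have h' : S.card ≤ t := le_trans (Finset.card_le_univ S) (by simp)
            exact_mod_cast h'
          have h1 : (S.card:ℝ) * (εt/t) ≤ t * (εt/t) :=
            mul_le_mul_of_nonneg_right hc (by positivity)
          have h2 : (t:ℝ) * (εt/t) = εt := by field_simp
          nlinarith [mul_le_mul_of_nonneg_left hD1tot (by positivity : (0:ℝ) ≤ 22*εt)]
  linarith [hfar2, htot, hCVle, hSbound, hNCle]
end
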